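/- arXiv:1703.08216 — 3 statements merged into one kernel-verified Lean document; each statement's English description precedes it below -/
import Mathlib

section
/- Let H, M be real Hilbert spaces, T : H → M* bounded linear satisfying ‖T*q‖_{H*} ≥ C‖q‖_M for all q ∈ M and some C > 0, and J : H → ℝ convex and Fréchet differentiable. Then u ∈ Ker T minimises J over Ker T if and only if there exists p ∈ M with T*p = ∇J(u); moreover such p, if it exists, is unique. -/
open InnerProductSpace

/-- Tangent line inequality for convex differentiable functions. -/
lemma convex_tangent_le {H : Type*} [NormedAddCommGroup H] [InnerProductSpace ℝ H]
    (J : H → ℝ) (J' : H → StrongDual ℝ H)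
    (hconv : ConvexOn ℝ Set.univ J) (hderiv : ∀ x, HasFDerivAt J (J' x) x)
    (u v : H) : J u + J' u (v - u) ≤ J v := by
  set g : ℝ → ℝ := fun t => J (t • (v - u) + u) with hg
  have hgconv : ConvexOn ℝ Set.univ g := by
    have := hconv.comp_affineMap (AffineMap.lineMap u v : ℝ →ᵃ[ℝ] H)
    simp only [Set.preimage_univ] at this
    have heq : g = J ∘ (AffineMap.lineMap u v) := by
      funext t
      simp only [g, Function.comp, AffineMap.lineMap_apply_module]
      congr 1
      module
    rw [heq]
    exact this
  have hgd : HasDerivAt g (J' u (v - u)) 0 := by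
    have hline : HasDerivAt (fun t : ℝ => t • (v - u) + u) (v - u) 0 := by
      simpa using ((hasDerivAt_id (0 : ℝ)).smul_const (v - u)).add_const u
    have := (hderiv ((0 : ℝ) • (v - u) + u)).comp_hasDerivAt 0 hline
    rw [zero_smul, zero_add] at this
    exact this
  have hslope := hgconv.le_slope_of_hasDerivAt (Set.mem_univ 0) (Set.mem_univ 1)
    one_pos hgd
  have h01 : J' u (v - u) ≤ g 1 - g 0 := by
    simpa [slope_def_field] using hslope
  have h0 : g 0 = J u := by simp [g]
  have h1 : g 1 = J v := by simp [g]
  rw [h0, h1] at h01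
  linarith

/-- The Lagrange multiplier theorem in Hilbert spaces: with `S = T*` satisfying
`‖T*q‖ ≥ C‖q‖` and `J` convex Fréchet differentiable, `u ∈ Ker T` minimises
`J` over `Ker T` iff `∇J(u) = T*p` for some `p ∈ M`; such `p` is unique. -/
theorem lagrange_multiplier_hilbert
    {H M : Type*} [NormedAddCommGroup H] [InnerProductSpace ℝ H] [CompleteSpace H]
    [NormedAddCommGroup M] [InnerProductSpace ℝ M] [CompleteSpace M]
    (T : H →L[ℝ] StrongDual ℝ M) (S : M →L[ℝ] StrongDual ℝ H)
    (hadj : ∀ (q : M) (u : H), S q u = T u q)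
    (C : ℝ) (hC : 0 < C) (hbound : ∀ q : M, C * ‖q‖ ≤ ‖S q‖)
    (J : H → ℝ) (J' : H → StrongDual ℝ H)
    (hconv : ConvexOn ℝ Set.univ J) (hderiv : ∀ x, HasFDerivAt J (J' x) x)
    (u : H) (hu : u ∈ LinearMap.ker (T : H →ₗ[ℝ] StrongDual ℝ M)) :
    ((∀ v ∈ LinearMap.ker (T : H →ₗ[ℝ] StrongDual ℝ M), J u ≤ J v) ↔ ∃ p : M, S p = J' u) ∧
      ∀ p p' : M, S p = J' u → S p' = J' u → p = p' := by
  have huT : T u = 0 := hu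
  have huniq : ∀ p p' : M, S p = J' u → S p' = J' u → p = p' := by
    intro p p' hp hp'
    have hz : S (p - p') = 0 := by rw [map_sub, hp, hp', sub_self]
    have hb := hbound (p - p')
    rw [hz, norm_zero] at hb
    have h1 : ‖p - p'‖ ≤ 0 := by nlinarith [norm_nonneg (p - p')]
    have : p - p' = 0 := norm_le_zero_iff.mp h1
    exact sub_eq_zero.mp this
  refine ⟨⟨?_, ?_⟩, huniq⟩
  · intro hmin
    have hker0 : ∀ v ∈ LinearMap.ker (T : H →ₗ[ℝ] StrongDual ℝ M), J' u v = 0 := by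
      intro v hv
      have hline : ∀ t : ℝ, u + t • v ∈ LinearMap.ker (T : H →ₗ[ℝ] StrongDual ℝ M) := by
        intro t
        simp [LinearMap.mem_ker, map_add, huT, LinearMap.mem_ker.mp hv]
      have hgd : HasDerivAt (fun t : ℝ => J (u + t • v)) (J' u v) 0 := by
        have hl : HasDerivAt (fun t : ℝ => u + t • v) v 0 := by
          simpa using ((hasDerivAt_id (0 : ℝ)).smul_const v).const_add u
        have := (hderiv (u + (0 : ℝ) • v)).comp_hasDerivAt 0 hl
        rw [zero_smul, add_zero] at this
        exact this
      have hmin0 : IsLocalMin (fun t : ℝ => J (u + t • v)) 0 := by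
        apply Filter.Eventually.of_forall
        intro t
        simpa using hmin _ (hline t)
      exact hmin0.hasDerivAt_eq_zero hgd
    set ρ := InnerProductSpace.toDual ℝ H with hρ
    set g : H := ρ.symm (J' u) with hgdef
    set S' : M →L[ℝ] H :=
      ρ.symm.toContinuousLinearEquiv.toContinuousLinearMap.comp S with hS'
    have hS'app : ∀ q, S' q = ρ.symm (S q) := fun q => rfl
    have hS'norm : ∀ q, ‖S' q‖ = ‖S q‖ := fun q => by
      rw [hS'app]; exact ρ.symm.norm_map _
    have hanti : AntilipschitzWith (⟨C, hC.le⟩ : NNReal)⁻¹ S' := by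
      refine AntilipschitzWith.of_le_mul_dist fun x y => ?_
      rw [dist_eq_norm, dist_eq_norm, ← map_sub]
      have hb := hbound (x - y)
      rw [← hS'norm] at hb
      have key : ‖x - y‖ ≤ C⁻¹ * ‖S' (x - y)‖ := by
        rw [le_inv_mul_iff₀ hC]
        exact hb
      have hcoe : (((⟨C, hC.le⟩ : NNReal)⁻¹ : NNReal) : ℝ) = C⁻¹ := by
        exact NNReal.coe_inv _
      rw [hcoe]
      exact key
    have hclosed : IsClosed (Set.range S') :=
      hanti.isClosed_range S'.uniformContinuous
    set K : Submodule ℝ H := LinearMap.range (S' : M →ₗ[ℝ] H) with hK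
    have hKclosed : IsClosed (K : Set H) := by
      simpa [K, LinearMap.coe_range] using hclosed
    haveI : CompleteSpace K := hKclosed.completeSpace_coe
    have horth : Kᗮᗮ = K := Submodule.orthogonal_orthogonal K
    have hgmem : g ∈ Kᗮᗮ := by
      rw [Submodule.mem_orthogonal]
      intro w hw
      have hwker : w ∈ LinearMap.ker (T : H →ₗ[ℝ] StrongDual ℝ M) := by
        rw [LinearMap.mem_ker]
        ext q
        have h1 : S' q ∈ K := LinearMap.mem_range_self _ q
        have h2 : inner ℝ (S' q) w = (0 : ℝ) :=
          (Submodule.mem_orthogonal K w).mp hw _ h1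
        rw [hS'app] at h2
        rw [InnerProductSpace.toDual_symm_apply] at h2
        rw [hadj] at h2
        simpa using h2
      have : inner ℝ g w = (0 : ℝ) := by
        rw [hgdef, InnerProductSpace.toDual_symm_apply]
        exact hker0 w hwker
      rw [real_inner_comm] at this
      exact this
    rw [horth] at hgmem
    obtain ⟨p, hp⟩ := hgmem
    refine ⟨p, ?_⟩
    have : ρ.symm (S p) = ρ.symm (J' u) := by rw [← hS'app, show S' p = g from hp, hgdef]
    exact ρ.symm.injective this
  · rintro ⟨p, hp⟩ v hv
    have htan := convex_tangent_le J J' hconv hderiv u v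
    have hz : J' u (v - u) = 0 := by
      rw [← hp, hadj, map_sub, huT, show T v = 0 from hv]
      simp
    linarith
end

section
/- Let Ω ⊂ ℝⁿ be a bounded smooth domain, f ∈ L²(Ω)ⁿ, V = {v ∈ H₀¹(Ω)ⁿ : div v = 0}, and J(v) = ½(∇v,∇v) − (f,v). Assume the pressure estimate ‖q‖_{L²} ≤ C‖∇q‖_{H⁻¹} for all q ∈ L₀²(Ω). Then u ∈ V minimises J over V if and only if there exists p ∈ L₀²(Ω) such that (∇u, ∇v) − (p, div v) = (f, v) for all v ∈ H₀¹(Ω)ⁿ; i.e. the weak stationary Stokes pressure p is the Lagrange multiplier of the incompressibility constraint div u = 0, and p is unique. -/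
set_option maxHeartbeats 800000


open scoped RealInnerProductSpace

/-- The pressure in the stationary Stokes equations is the Lagrange multiplier
of the incompressibility constraint, in abstract Hilbert form: `H` plays the
role of `H₀¹(Ω)ⁿ`, `F` of `L²(Ω)ⁿ`, `G` of the `L²` space of gradients, and
`L` of `L₀²(Ω)`; `emb` is the inclusion `H₀¹ ↪ L²`, `grad` the gradient, `dvg`
the weak divergence, and `S q = ∇q ∈ H⁻¹` is given by `⟨S q, v⟩ = (div v, q)`.
Assuming the Nečas estimate `‖q‖_{L²} ≤ C‖∇q‖_{H⁻¹}`, a divergence-free `u`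
minimises `J(v) = ½(∇v,∇v) − (f,v)` over `{v : div v = 0}` iff there is a
(unique) pressure `p` with `(∇u,∇v) − (p, div v) = (f,v)` for all `v`. -/
theorem stokes_pressure_is_lagrange_multiplier
    {H F G L : Type*}
    [NormedAddCommGroup H] [InnerProductSpace ℝ H] [CompleteSpace H]
    [NormedAddCommGroup F] [InnerProductSpace ℝ F] [CompleteSpace F]
    [NormedAddCommGroup G] [InnerProductSpace ℝ G] [CompleteSpace G]
    [NormedAddCommGroup L] [InnerProductSpace ℝ L] [CompleteSpace L]
    (emb : H →L[ℝ] F) (grad : H →L[ℝ] G) (dvg : H →L[ℝ] L)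
    (S : L →L[ℝ] StrongDual ℝ H)
    (hS : ∀ (q : L) (v : H), S q v = ⟪dvg v, q⟫)
    (C : ℝ) (hC : 0 < C) (hNecas : ∀ q : L, ‖q‖ ≤ C * ‖S q‖)
    (f : F) (u : H) (hu : dvg u = 0) :
    (∀ v : H, dvg v = 0 →
        (1 / 2) * ⟪grad u, grad u⟫ - ⟪f, emb u⟫ ≤
          (1 / 2) * ⟪grad v, grad v⟫ - ⟪f, emb v⟫) ↔
      ∃! p : L, ∀ v : H, ⟪grad u, grad v⟫ - ⟪p, dvg v⟫ = ⟪f, emb v⟫ := by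
  set Dt := ContinuousLinearMap.adjoint dvg with hDtdef
  have hDt : ∀ (q : L) (v : H), ⟪Dt q, v⟫ = ⟪q, dvg v⟫ := fun q v =>
    ContinuousLinearMap.adjoint_inner_left dvg v q
  have hSnorm : ∀ q : L, ‖S q‖ = ‖Dt q‖ := by
    intro q
    have hSq : S q = InnerProductSpace.toDual ℝ H (Dt q) := by
      ext v
      rw [hS, InnerProductSpace.toDual_apply_apply, hDt, real_inner_comm]
    rw [hSq]
    exact (InnerProductSpace.toDual ℝ H).norm_map _
  have hbelow : ∀ q : L, ‖q‖ ≤ C * ‖Dt q‖ := fun q => by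
    rw [← hSnorm]; exact hNecas q
  have hinj : ∀ q : L, (∀ v : H, ⟪q, dvg v⟫ = 0) → q = 0 := by
    intro q hq
    have h0 : Dt q = 0 := by
      have : ⟪Dt q, Dt q⟫ = 0 := by rw [hDt]; exact hq _
      exact inner_self_eq_zero.mp this
    have : ‖q‖ ≤ 0 := by simpa [h0] using hbelow q
    simpa using norm_le_zero_iff.mp this
  constructor
  · intro hmin
    set w := ContinuousLinearMap.adjoint grad (grad u) - ContinuousLinearMap.adjoint emb f with hwdef
    have hw : ∀ v : H, ⟪w, v⟫ = ⟪grad u, grad v⟫ - ⟪f, emb v⟫ := by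
      intro v
      simp [hwdef, inner_sub_left, ContinuousLinearMap.adjoint_inner_left]
    have hker : ∀ v : H, dvg v = 0 → ⟪w, v⟫ = 0 := by
      intro v hv
      have key : ∀ t : ℝ, 0 ≤ t * ⟪w, v⟫ + t ^ 2 * (1 / 2) * ⟪grad v, grad v⟫ := by
        intro t
        have hvt : dvg (u + t • v) = 0 := by
          simp [map_add, map_smul, hu, hv]
        have h := hmin (u + t • v) hvt
        have hexp : ⟪grad (u + t • v), grad (u + t • v)⟫
            = ⟪grad u, grad u⟫ + 2 * t * ⟪grad u, grad v⟫ + t ^ 2 * ⟪grad v, grad v⟫ := by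
          simp only [map_add, map_smul, inner_add_add_self, real_inner_smul_left,
            real_inner_smul_right]
          ring_nf
          rw [real_inner_comm (grad v) (grad u)]
          ring
        have hfe : ⟪f, emb (u + t • v)⟫ = ⟪f, emb u⟫ + t * ⟪f, emb v⟫ := by
          simp [map_add, map_smul, inner_add_right, real_inner_smul_right]
        rw [hexp, hfe] at h
        rw [hw v]
        linarith [h]
      have hb : (0:ℝ) ≤ ⟪grad v, grad v⟫ := real_inner_self_nonneg
      by_contra hne
      set a := ⟪w, v⟫ with ha
      set b := ⟪grad v, grad v⟫ with hbdef
      have hb1 : (0:ℝ) < b + 1 := by linarith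
      have h := key (-a / (b + 1))
      have hE : (-a / (b + 1)) * a + (-a / (b + 1)) ^ 2 * (1 / 2) * b
          = (-(a ^ 2) * (b + 1) + a ^ 2 * (1 / 2) * b) / (b + 1) ^ 2 := by
        field_simp
      rw [hE] at h
      have hd : (0:ℝ) < (b + 1) ^ 2 := by positivity
      have hnum : 0 ≤ -(a ^ 2) * (b + 1) + a ^ 2 * (1 / 2) * b := by
        have := (div_nonneg_iff.mp h)
        rcases this with ⟨h1, _⟩ | ⟨_, h2⟩
        · exact h1
        · exact absurd hd (not_lt.mpr h2)
      have ha2 : 0 < a ^ 2 := by positivity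
      have h4 : 0 ≤ a ^ 2 * b := mul_nonneg ha2.le hb
      linarith [hnum, ha2, h4]
    -- w lies in the range of Dt
    have hanti : AntilipschitzWith (⟨C, hC.le⟩ : NNReal) Dt :=
      ContinuousLinearMap.antilipschitz_of_bound Dt (by exact hbelow)
    have hclosed : IsClosed (Set.range Dt) :=
      hanti.isClosed_range Dt.uniformContinuous
    have hclosedS : IsClosed ((LinearMap.range (Dt : L →ₗ[ℝ] H) : Submodule ℝ H) : Set H) := by
      exact hclosed
    have hkerEq : (LinearMap.ker (dvg : H →ₗ[ℝ] L) : Submodule ℝ H) = (LinearMap.range (Dt : L →ₗ[ℝ] H))ᗮ := by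
      ext v
      constructor
      · intro hv
        rw [Submodule.mem_orthogonal]
        rintro x ⟨q, rfl⟩
        rw [ContinuousLinearMap.coe_coe, hDt, (show dvg v = 0 from LinearMap.mem_ker.mp hv), inner_zero_right]
      · intro hv
        rw [LinearMap.mem_ker]
        have h1 : ⟪Dt (dvg v), v⟫ = 0 :=
          (Submodule.mem_orthogonal _ _).mp hv _ (LinearMap.mem_range_self _ _)
        rw [hDt] at h1
        exact inner_self_eq_zero.mp h1
    have hwmem : w ∈ LinearMap.range (Dt : L →ₗ[ℝ] H) := by
      have h1 : w ∈ ((LinearMap.ker (dvg : H →ₗ[ℝ] L) : Submodule ℝ H))ᗮ := by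
        rw [Submodule.mem_orthogonal]
        intro x hx
        rw [real_inner_comm]
        exact hker x (LinearMap.mem_ker.mp hx)
      rw [hkerEq, Submodule.orthogonal_orthogonal_eq_closure,
        hclosedS.submodule_topologicalClosure_eq] at h1
      exact h1
    obtain ⟨p, hp⟩ := hwmem
    refine ⟨p, ?_, ?_⟩
    · intro v
      have h1 : ⟪w, v⟫ = ⟪p, dvg v⟫ := by rw [← hp]; exact hDt p v
      rw [hw v] at h1
      linarith [h1]
    · intro q hq
      have hqp : ∀ v : H, ⟪q - p, dvg v⟫ = 0 := by
        intro v
        have h1 := hq v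
        have h2 : ⟪grad u, grad v⟫ - ⟪p, dvg v⟫ = ⟪f, emb v⟫ := by
          have h3 : ⟪w, v⟫ = ⟪p, dvg v⟫ := by rw [← hp]; exact hDt p v
          rw [hw v] at h3
          linarith
        rw [inner_sub_left]
        linarith
      have := hinj (q - p) hqp
      exact sub_eq_zero.mp this
  · rintro ⟨p, hp, _⟩ v hv
    have h1 := hp (v - u)
    have hdv : dvg (v - u) = 0 := by simp [map_sub, hu, hv]
    rw [hdv, inner_zero_right, sub_zero] at h1
    rw [map_sub, map_sub, inner_sub_right, inner_sub_right] at h1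
    have hsq : (0:ℝ) ≤ ⟪grad v - grad u, grad v - grad u⟫ := real_inner_self_nonneg
    have hexp : ⟪grad v - grad u, grad v - grad u⟫
        = ⟪grad v, grad v⟫ - 2 * ⟪grad u, grad v⟫ + ⟪grad u, grad u⟫ := by
      simp only [inner_sub_sub_self]
      rw [real_inner_comm (grad v) (grad u)]
      ring
    rw [hexp] at hsq
    linarith [h1, hsq]
end

section
/- Let H, M be real Hilbert spaces and T : H → M* a bounded linear operator with ‖T*q‖_{H*} ≥ C‖q‖_M for all q ∈ M. Then for any u* ∈ H* vanishing on Ker T (i.e. u* ∈ (Ker T)°), there exists a unique p ∈ M with T*p = u*, and ‖p‖_M ≤ (1/C)‖u*‖_{H*}. -/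
open RealInnerProductSpace


/-- Under the bound `‖T*q‖ ≥ C‖q‖`, every functional `φ ∈ H*` annihilating
`Ker T` is `T*p` for a unique `p ∈ M`, with `‖p‖ ≤ (1/C)‖φ‖`. -/
theorem annihilator_functional_eq_adjoint_unique
    {H M : Type*} [NormedAddCommGroup H] [InnerProductSpace ℝ H] [CompleteSpace H]
    [NormedAddCommGroup M] [InnerProductSpace ℝ M] [CompleteSpace M]
    (T : H →L[ℝ] StrongDual ℝ M) (S : M →L[ℝ] StrongDual ℝ H)
    (hadj : ∀ (q : M) (u : H), S q u = T u q)
    (C : ℝ) (hC : 0 < C) (hbound : ∀ q : M, C * ‖q‖ ≤ ‖S q‖)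
    (φ : StrongDual ℝ H) (hφ : ∀ v ∈ LinearMap.ker (T : H →ₗ[ℝ] StrongDual ℝ M), φ v = 0) :
    (∃! p : M, S p = φ) ∧ ∀ p : M, S p = φ → ‖p‖ ≤ (1 / C) * ‖φ‖ := by
  set e := InnerProductSpace.toDual ℝ H with he
  set A : M →L[ℝ] H := (e.symm.toContinuousLinearEquiv.toContinuousLinearMap).comp S with hA
  have hAinner : ∀ (q : M) (u : H), (inner ℝ (A q) u : ℝ) = S q u := by
    intro q u
    have : e (A q) = S q := by
      simp [hA, ContinuousLinearMap.comp_apply]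
    rw [← InnerProductSpace.toDual_apply_apply (𝕜 := ℝ), this]
  have hAnorm : ∀ q : M, ‖A q‖ = ‖S q‖ := by
    intro q
    simp [hA, ContinuousLinearMap.comp_apply]
  -- antilipschitz
  have hanti : AntilipschitzWith (⟨C⁻¹, by positivity⟩ : NNReal) A := by
    apply AddMonoidHomClass.antilipschitz_of_bound
    intro q
    rw [hAnorm]
    show ‖q‖ ≤ C⁻¹ * ‖S q‖
    rw [inv_mul_eq_div, le_div_iff₀ hC, mul_comm]
    exact hbound q
  have hAinj : Function.Injective A := hanti.injective
  have hclosed : IsClosed (Set.range A) :=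
    hanti.isClosed_range A.uniformContinuous
  have hrange_closed : (LinearMap.range (A : M →ₗ[ℝ] H)).topologicalClosure = LinearMap.range (A : M →ₗ[ℝ] H) := by
    apply IsClosed.submodule_topologicalClosure_eq
    have hset : (LinearMap.range (A : M →ₗ[ℝ] H) : Set H) = Set.range A := by
      ext x; simp [LinearMap.mem_range]
    rw [hset]
    exact hclosed
  have hortho : (LinearMap.range (A : M →ₗ[ℝ] H))ᗮ = LinearMap.ker (T : H →ₗ[ℝ] StrongDual ℝ M) := by
    ext u
    rw [Submodule.mem_orthogonal, LinearMap.mem_ker]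
    constructor
    · intro h
      ext q
      have := h (A q) ⟨q, rfl⟩
      rw [hAinner q u, hadj q u] at this
      simpa using this
    · intro h v hv
      obtain ⟨q, rfl⟩ := hv
      rw [ContinuousLinearMap.coe_coe, hAinner q u, hadj q u, show T u = 0 from h]
      simp
  -- x := e.symm φ lies in (ker T)ᗮ
  set x : H := e.symm φ with hx
  have hex : e x = φ := by simp [hx]
  have hxmem : x ∈ (LinearMap.ker (T : H →ₗ[ℝ] StrongDual ℝ M))ᗮ := by
    rw [Submodule.mem_orthogonal]
    intro u hu
    have : (inner ℝ x u : ℝ) = φ u := by rw [← InnerProductSpace.toDual_apply_apply (𝕜 := ℝ), hex]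
    rw [real_inner_comm, this, hφ u hu]
  have hxrange : x ∈ LinearMap.range (A : M →ₗ[ℝ] H) := by
    rw [← hortho, Submodule.orthogonal_orthogonal_eq_closure, hrange_closed] at hxmem
    exact hxmem
  obtain ⟨p, hp⟩ := hxrange
  have hSp : S p = φ := by
    have : e (A p) = S p := by simp [hA, ContinuousLinearMap.comp_apply]
    rw [← this, show A p = x from hp, hex]
  have hSinj : ∀ p' : M, S p' = φ → p' = p := by
    intro p' hp'
    apply hAinj
    rw [show A p = x from hp]
    have : e (A p') = S p' := by simp [hA, ContinuousLinearMap.comp_apply]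
    apply e.injective
    rw [this, hp', hex]
  refine ⟨⟨p, hSp, hSinj⟩, ?_⟩
  intro p' hp'
  have := hbound p'
  rw [hp'] at this
  rw [one_div, inv_mul_eq_div, le_div_iff₀ hC, mul_comm]
  exact this
end
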